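/- Let x be feasible for the cut LP on tree G, let E^h = {e : x(cov(e)) ≥ 2/ε} and let G^h be the tree obtained by contracting E(G) \ E^h. Then y = (ε/2)·x is feasible for the cut LP on G^h, and hence (via 2-approximate rounding) there exists L₀ ⊆ L covering all edges of E^h with c(L₀) ≤ ε·cᵀx. -/

import Mathlib

open SimpleGraph
open scoped Classical

/-- The unique path between two vertices of a tree, as a walk. -/
noncomputable def tpath {V : Type*} (G : SimpleGraph V) (hG : G.IsTree) (u v : V) : G.Walk u v :=
  (hG.existsUnique_path u v).choose

/-- `cov(e)`: the links whose tree path contains the edge `e`. -/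
noncomputable def covE {V : Type*} (G : SimpleGraph V) (hG : G.IsTree) (e : Sym2 V) :
    Set (V × V) := {ℓ | e ∈ (tpath G hG ℓ.1 ℓ.2).edges}

section TreeLemmas

variable {V : Type*} [DecidableEq V] {G : SimpleGraph V} (hG : G.IsTree)

lemma tpath_isPath (u v : V) : (tpath G hG u v).IsPath :=
  (hG.existsUnique_path u v).choose_spec.1

lemma eq_tpath {u v : V} (p : G.Walk u v) (hp : p.IsPath) : p = tpath G hG u v :=
  (hG.existsUnique_path u v).choose_spec.2 p hp

lemma tpath_self (u : V) : tpath G hG u u = SimpleGraph.Walk.nil :=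
  (eq_tpath hG SimpleGraph.Walk.nil SimpleGraph.Walk.IsPath.nil).symm

lemma tpath_length (u v : V) : (tpath G hG u v).length = G.dist u v := by
  obtain ⟨p, hp⟩ := (hG.isConnected.preconnected u v).exists_walk_length_eq_dist
  have hpp : p.IsPath := p.isPath_of_length_eq_dist hp
  rw [← eq_tpath hG p hpp]
  exact hp

/-- Appending two paths whose supports only share the junction gives a path. -/
lemma isPath_append' {u v w : V} {p : G.Walk u v} {q : G.Walk v w}
    (hp : p.IsPath) (hq : q.IsPath)
    (h : ∀ z, z ∈ p.support → z ∈ q.support → z = v) : (p.append q).IsPath := by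
  rw [SimpleGraph.Walk.isPath_def, SimpleGraph.Walk.support_append]
  apply List.Nodup.append
  · exact hp.support_nodup
  · have := hq.support_nodup
    rw [q.support_eq_cons] at this
    exact this.of_cons
  · intro z hz hz'
    have hzq : z ∈ q.support := by
      rw [q.support_eq_cons]
      exact List.mem_cons_of_mem _ hz'
    have hzv : z = v := h z hz hzq
    subst hzv
    have := hq.support_nodup
    rw [q.support_eq_cons] at this
    exact (List.nodup_cons.1 this).1 hz'

variable (r : V)

lemma rho_cons {a : V} (ha : a ≠ r) :
    ∃ (y : V) (h : G.Adj a y), tpath G hG a r = SimpleGraph.Walk.cons h (tpath G hG y r) ∧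
      G.dist a r = G.dist y r + 1 := by
  obtain ⟨y, h, q, hq⟩ := SimpleGraph.Walk.exists_eq_cons_of_ne ha (tpath G hG a r)
  have hpath : (SimpleGraph.Walk.cons h q).IsPath := hq ▸ tpath_isPath hG a r
  rw [SimpleGraph.Walk.cons_isPath_iff] at hpath
  have hqt : q = tpath G hG y r := eq_tpath hG q hpath.1
  refine ⟨y, h, by rw [hq, hqt], ?_⟩
  have h1 : (tpath G hG a r).length = q.length + 1 := by
    rw [hq]; simp [SimpleGraph.Walk.length_cons]
  rw [tpath_length hG a r, hqt, tpath_length hG y r] at h1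
  omega

lemma dist_le_of_mem_support {a z : V} (hz : z ∈ (tpath G hG a r).support) :
    G.dist z r ≤ G.dist a r := by
  have h1 : G.dist z r ≤ ((tpath G hG a r).dropUntil z hz).length :=
    SimpleGraph.dist_le _
  have h2 := congr_arg SimpleGraph.Walk.length ((tpath G hG a r).take_spec hz)
  rw [SimpleGraph.Walk.length_append] at h2
  rw [← tpath_length hG a r]
  omega

lemma rho_dropUntil {a z : V} (hz : z ∈ (tpath G hG a r).support) :
    (tpath G hG a r).dropUntil z hz = tpath G hG z r :=
  eq_tpath hG _ ((tpath_isPath hG a r).dropUntil hz)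

end TreeLemmas

/-- depth of an edge: larger distance to the root among its two endpoints. -/
noncomputable def edepth {V : Type*} (G : SimpleGraph V) (r : V) : Sym2 V → ℕ :=
  Sym2.lift ⟨fun x y => max (G.dist x r) (G.dist y r), fun x y => max_comm _ _⟩

lemma edepth_mk {V : Type*} (G : SimpleGraph V) (r x y : V) :
    edepth G r s(x, y) = max (G.dist x r) (G.dist y r) := rfl

section DepthLemmas

variable {V : Type*} [DecidableEq V] {G : SimpleGraph V} (hG : G.IsTree) (r : V)

lemma edepth_le_of_mem_edges {a : V} {f : Sym2 V} (hf : f ∈ (tpath G hG a r).edges) :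
    edepth G r f ≤ G.dist a r := by
  induction f with
  | _ x y =>
    rw [edepth_mk]
    have hx := dist_le_of_mem_support hG r
      (SimpleGraph.Walk.fst_mem_support_of_mem_edges _ hf)
    have hy := dist_le_of_mem_support hG r
      (SimpleGraph.Walk.snd_mem_support_of_mem_edges _ hf)
    omega

end DepthLemmas

section MainTreeLemmas

set_option linter.unusedSectionVars false

variable {V : Type*} [DecidableEq V] {G : SimpleGraph V} (hG : G.IsTree) (r : V)

open SimpleGraph.Walk

/-- Edges of a root path strictly above an edge `e` form exactly the root path of the
upper endpoint of `e`. -/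
lemma suf : ∀ (n : ℕ) (a : V), G.dist a r ≤ n → ∀ e ∈ (tpath G hG a r).edges,
    ∃ x y : V, e = s(x, y) ∧ G.dist x r = G.dist y r + 1 ∧ edepth G r e = G.dist x r ∧
      (∀ f ∈ (tpath G hG y r).edges, f ∈ (tpath G hG a r).edges) ∧
      (∀ f ∈ (tpath G hG a r).edges, (edepth G r f < edepth G r e ↔ f ∈ (tpath G hG y r).edges)) := by
  intro n
  induction n with
  | zero =>
    intro a hda e he
    rcases eq_or_ne a r with rfl | ha
    · rw [tpath_self hG] at he
      simp at he
    · have := hG.isConnected.pos_dist_of_ne ha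
      omega
  | succ n IH =>
    intro a hda e he
    rcases eq_or_ne a r with rfl | ha
    · rw [tpath_self hG] at he
      simp at he
    obtain ⟨y₀, hadj, heq, hdist⟩ := rho_cons hG r ha
    rw [heq, edges_cons, List.mem_cons] at he
    have hy₀sub : ∀ f ∈ (tpath G hG y₀ r).edges, f ∈ (tpath G hG a r).edges := by
      intro f hf
      rw [heq, edges_cons, List.mem_cons]
      exact Or.inr hf
    rcases he with he | he
    · -- e is the first edge s(a, y₀)
      refine ⟨a, y₀, he, hdist, ?_, hy₀sub, ?_⟩
      · rw [he, edepth_mk]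
        omega
      · intro f hf
        rw [heq, edges_cons, List.mem_cons] at hf
        rcases hf with rfl | hf
        · rw [← he]
          constructor
          · omega
          · intro hmem
            have := dist_le_of_mem_support hG r
              (fst_mem_support_of_mem_edges _ (he ▸ hmem))
            omega
        · have h1 : edepth G r f ≤ G.dist y₀ r := edepth_le_of_mem_edges hG r hf
          have h2 : edepth G r e = G.dist a r := by rw [he, edepth_mk]; omega
          constructor
          · intro _; exact hf
          · intro _; omega
    · -- e lies deeper, use the induction hypothesis at y₀
      have hd : G.dist y₀ r ≤ n := by omega
      obtain ⟨x, y, hexy, hxy, hde, hsub, hiff⟩ := IH y₀ hd e he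
      have hyy₀ : G.dist y r ≤ G.dist y₀ r := by
        have : y ∈ (tpath G hG y₀ r).support :=
          snd_mem_support_of_mem_edges _ (hexy ▸ he)
        exact dist_le_of_mem_support hG r this
      refine ⟨x, y, hexy, hxy, hde, fun f hf => hy₀sub f (hsub f hf), ?_⟩
      intro f hf
      rw [heq, edges_cons, List.mem_cons] at hf
      rcases hf with rfl | hf
      · have h2 : edepth G r s(a, y₀) = G.dist a r := by rw [edepth_mk]; omega
        have h3 : edepth G r e ≤ G.dist y₀ r := edepth_le_of_mem_edges hG r he
        constructor
        · intro hlt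
          omega
        · intro hmem
          have h4 : a ∈ (tpath G hG y r).support :=
            fst_mem_support_of_mem_edges _ hmem
          have h5 := dist_le_of_mem_support hG r h4
          omega
      · exact hiff f hf

/-- distinct edges of a root path have distinct depths. -/
lemma depth_inj : ∀ (n : ℕ) (a : V), G.dist a r ≤ n → ∀ e ∈ (tpath G hG a r).edges,
    ∀ f ∈ (tpath G hG a r).edges, e ≠ f → edepth G r e ≠ edepth G r f := by
  intro n
  induction n with
  | zero =>
    intro a hda e he f hf hne
    rcases eq_or_ne a r with rfl | ha
    · rw [tpath_self hG] at he; simp at he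
    · have := hG.isConnected.pos_dist_of_ne ha
      omega
  | succ n IH =>
    intro a hda e he f hf hne
    rcases eq_or_ne a r with rfl | ha
    · rw [tpath_self hG] at he; simp at he
    obtain ⟨y₀, hadj, heq, hdist⟩ := rho_cons hG r ha
    rw [heq, edges_cons, List.mem_cons] at he hf
    have hd : G.dist y₀ r ≤ n := by omega
    rcases he with rfl | he
    · rcases hf with rfl | hf
      · exact absurd rfl hne
      · have h1 : edepth G r f ≤ G.dist y₀ r := edepth_le_of_mem_edges hG r hf
        have h2 : edepth G r s(a, y₀) = G.dist a r := by rw [edepth_mk]; omega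
        omega
    · rcases hf with rfl | hf
      · have h1 : edepth G r e ≤ G.dist y₀ r := edepth_le_of_mem_edges hG r he
        have h2 : edepth G r s(a, y₀) = G.dist a r := by rw [edepth_mk]; omega
        omega
      · exact IH y₀ hd e he f hf hne

/-- Characterization of the edges of an initial segment of a root path. -/
lemma pre : ∀ (n : ℕ) (a : V), G.dist a r ≤ n → ∀ w, w ∈ (tpath G hG a r).support →
    ∀ f, (f ∈ (tpath G hG a w).edges ↔
      f ∈ (tpath G hG a r).edges ∧ G.dist w r < edepth G r f) := by
  intro n
  induction n with
  | zero =>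
    intro a hda w hw f
    rcases eq_or_ne a r with rfl | ha
    · rw [tpath_self hG] at hw
      simp only [support_nil, List.mem_singleton] at hw
      subst hw
      rw [tpath_self hG]
      simp
    · have := hG.isConnected.pos_dist_of_ne ha
      omega
  | succ n IH =>
    intro a hda w hw f
    rcases eq_or_ne w a with rfl | hwa
    · rw [tpath_self hG]
      simp only [edges_nil, List.not_mem_nil, false_iff, not_and, not_lt]
      intro hf
      exact edepth_le_of_mem_edges hG r hf
    rcases eq_or_ne a r with rfl | ha
    · rw [tpath_self hG] at hw
      simp only [support_nil, List.mem_singleton] at hw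
      exact absurd hw hwa
    obtain ⟨y₀, hadj, heq, hdist⟩ := rho_cons hG r ha
    have hwy₀ : w ∈ (tpath G hG y₀ r).support := by
      rw [heq, support_cons, List.mem_cons] at hw
      rcases hw with rfl | hw
      · exact absurd rfl hwa
      · exact hw
    have hd : G.dist y₀ r ≤ n := by omega
    -- tpath a w = cons hadj (tpath y₀ w)
    have htyw : (tpath G hG y₀ r).takeUntil w hwy₀ = tpath G hG y₀ w :=
      eq_tpath hG _ ((tpath_isPath hG y₀ r).takeUntil hwy₀)
    have hconspath : (SimpleGraph.Walk.cons hadj (tpath G hG y₀ w)).IsPath := by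
      rw [cons_isPath_iff]
      refine ⟨tpath_isPath hG y₀ w, ?_⟩
      intro hmem
      rw [← htyw] at hmem
      have := support_takeUntil_subset _ hwy₀ hmem
      have := dist_le_of_mem_support hG r this
      omega
    have hcons : tpath G hG a w = SimpleGraph.Walk.cons hadj (tpath G hG y₀ w) :=
      (eq_tpath hG _ hconspath).symm
    have hwle : G.dist w r ≤ G.dist y₀ r := dist_le_of_mem_support hG r hwy₀
    constructor
    · intro hf
      rw [hcons, edges_cons, List.mem_cons] at hf
      rcases hf with rfl | hf
      · refine ⟨by rw [heq, edges_cons]; exact List.mem_cons_self, ?_⟩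
        rw [edepth_mk]
        omega
      · obtain ⟨h1, h2⟩ := (IH y₀ hd w hwy₀ f).1 hf
        refine ⟨?_, h2⟩
        rw [heq, edges_cons]
        exact List.mem_cons_of_mem _ h1
    · rintro ⟨hf, hlt⟩
      rw [heq, edges_cons, List.mem_cons] at hf
      rw [hcons, edges_cons, List.mem_cons]
      rcases hf with rfl | hf
      · exact Or.inl rfl
      · exact Or.inr ((IH y₀ hd w hwy₀ f).2 ⟨hf, hlt⟩)

include hG in
/-- First vertex on a path satisfying a predicate. -/
lemma first_hit : ∀ {u v : V} (p : G.Walk u v), p.IsPath → ∀ (P : V → Prop), P v →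
    ∃ w, ∃ hw : w ∈ p.support, P w ∧ ∀ z ∈ (p.takeUntil w hw).support, P z → z = w := by
  intro u v p
  induction p with
  | nil =>
    intro hp P hv
    refine ⟨_, start_mem_support _, hv, ?_⟩
    intro z hz _
    have h1 : ((Walk.nil : G.Walk _ _).takeUntil _ (start_mem_support _)).IsPath :=
      hp.takeUntil _
    rw [isPath_iff_eq_nil] at h1
    rw [h1] at hz
    simpa using hz
  | cons hadj q IHq =>
    rename_i a b vv
    intro hp P hv
    by_cases hPa : P a
    · refine ⟨a, start_mem_support _, hPa, ?_⟩
      intro z hz _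
      have h1 : (((Walk.cons hadj q)).takeUntil a (start_mem_support _)).IsPath :=
        hp.takeUntil _
      rw [isPath_iff_eq_nil] at h1
      rw [h1] at hz
      simpa using hz
    · have hq : q.IsPath := hp.of_cons
      obtain ⟨w, hw, hPw, hfirst⟩ := IHq hq P hv
      have hwmem : w ∈ (Walk.cons hadj q).support := by
        rw [support_cons]
        exact List.mem_cons_of_mem _ hw
      refine ⟨w, hwmem, hPw, ?_⟩
      have hwa : w ≠ a := fun h => hPa (h ▸ hPw)
      -- takeUntil of a cons
      have hconspath : (Walk.cons hadj (q.takeUntil w hw)).IsPath := by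
        rw [cons_isPath_iff]
        refine ⟨hq.takeUntil hw, ?_⟩
        intro hmem
        have := support_takeUntil_subset _ hw hmem
        rw [cons_isPath_iff] at hp
        exact hp.2 this
      have h2 : ((Walk.cons hadj q)).takeUntil w hwmem =
          Walk.cons hadj (q.takeUntil w hw) := by
        have e1 := eq_tpath hG _ (hp.takeUntil hwmem)
        have e2 := eq_tpath hG _ hconspath
        rw [e1, e2]
      rw [h2, support_cons]
      intro z hz hPz
      rcases List.mem_cons.1 hz with rfl | hz
      · exact absurd hPz hPa
      · exact hfirst z hz hPz

/-- The meet (LCA w.r.t. root `r`) of two vertices: splitting the tree path into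
two vertical paths. -/
lemma meet (u v : V) : ∃ w, w ∈ (tpath G hG u r).support ∧ w ∈ (tpath G hG v r).support ∧
    ∀ f, f ∈ (tpath G hG u v).edges ↔
      (f ∈ (tpath G hG u w).edges ∨ f ∈ (tpath G hG v w).edges) := by
  have hp : (tpath G hG u v).IsPath := tpath_isPath hG u v
  obtain ⟨w, hw, hwv, hfirst⟩ := first_hit hG (tpath G hG u v) hp
    (fun z => z ∈ (tpath G hG v r).support) (start_mem_support _)
  have hp₁ : ((tpath G hG u v).takeUntil w hw).IsPath := hp.takeUntil hw
  have hp₂ : ((tpath G hG u v).dropUntil w hw).IsPath := hp.dropUntil hw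
  -- the path from u to r through w
  have hdisj : ∀ z, z ∈ ((tpath G hG u v).takeUntil w hw).support →
      z ∈ (tpath G hG w r).support → z = w := by
    intro z hz1 hz2
    apply hfirst z hz1
    have h3 : tpath G hG w r = (tpath G hG v r).dropUntil w hwv :=
      (rho_dropUntil hG r hwv).symm
    rw [h3] at hz2
    exact support_dropUntil_subset _ hwv hz2
  have happ : (((tpath G hG u v).takeUntil w hw).append (tpath G hG w r)).IsPath :=
    isPath_append' hp₁ (tpath_isPath hG w r) hdisj
  have hru : ((tpath G hG u v).takeUntil w hw).append (tpath G hG w r) = tpath G hG u r :=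
    eq_tpath hG _ happ
  have hwu : w ∈ (tpath G hG u r).support := by
    rw [← hru, mem_support_append_iff]
    exact Or.inl (end_mem_support _)
  refine ⟨w, hwu, hwv, ?_⟩
  have ht1 : (tpath G hG u v).takeUntil w hw = tpath G hG u w := eq_tpath hG _ hp₁
  have ht2 : ((tpath G hG u v).dropUntil w hw).reverse = tpath G hG v w :=
    eq_tpath hG _ hp₂.reverse
  intro f
  constructor
  · intro hf
    rw [← (tpath G hG u v).take_spec hw, edges_append, List.mem_append] at hf
    rcases hf with hf | hf
    · exact Or.inl (ht1 ▸ hf)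
    · right
      rw [← ht2, edges_reverse, List.mem_reverse]
      exact hf
  · intro hf
    rw [← (tpath G hG u v).take_spec hw, edges_append, List.mem_append]
    rcases hf with hf | hf
    · exact Or.inl (ht1 ▸ hf)
    · right
      rw [← ht2, edges_reverse, List.mem_reverse] at hf
      exact hf

end MainTreeLemmas

section Helpers

lemma sum_image_le' {β γ : Type*} [DecidableEq γ] (s : Finset β) (f : β → γ) (g : γ → ℝ)
    (hg : ∀ b ∈ s, 0 ≤ g (f b)) : ∑ a ∈ s.image f, g a ≤ ∑ b ∈ s, g (f b) := by
  classical
  induction s using Finset.induction with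
  | empty => simp
  | insert _ _ hnotmem ih =>
    rename_i a s
    rw [Finset.image_insert, Finset.sum_insert hnotmem]
    by_cases hfa : f a ∈ s.image f
    · rw [Finset.insert_eq_self.2 hfa]
      have := ih (fun b hb => hg b (Finset.mem_insert_of_mem hb))
      have h0 : 0 ≤ g (f a) := hg a (Finset.mem_insert_self _ _)
      linarith
    · rw [Finset.sum_insert hfa]
      have := ih (fun b hb => hg b (Finset.mem_insert_of_mem hb))
      linarith

end Helpers
open Finset

/-- Abstract "vertical covering" rounding lemma, proved by a local-ratio /
primal-dual induction on `S`. -/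
lemma AVL {ι α : Type*} [DecidableEq ι] [DecidableEq α] (d : α → ℕ)
    (K : Finset ι) (path : ι → Finset α) (z : ι → ℝ)
    (hz : ∀ σ ∈ K, 0 ≤ z σ)
    (hD : ∀ σ ∈ K, ∀ e ∈ path σ, ∀ f ∈ path σ, e ≠ f → d e ≠ d f)
    (hC : ∀ σ ∈ K, ∀ σ' ∈ K, ∀ e, e ∈ path σ → e ∈ path σ' →
      ((path σ).filter (fun f => d f < d e) ⊆ path σ' ∨
        (path σ').filter (fun f => d f < d e) ⊆ path σ)) :
    ∀ (n : ℕ) (γ : ι → ℝ) (S : Finset α), S.card ≤ n → (∀ σ ∈ K, 0 ≤ γ σ) →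
      (∀ e ∈ S, 1 ≤ ∑ σ ∈ K.filter (fun σ => e ∈ path σ), z σ) →
      ∃ K₀ ⊆ K, (∀ e ∈ S, ∃ σ ∈ K₀, e ∈ path σ) ∧
        (∑ σ ∈ K₀, γ σ ≤ ∑ σ ∈ K, γ σ * z σ) ∧
        (∀ σ ∈ K₀, ∃ w ∈ S, w ∈ path σ ∧ ∀ σ' ∈ K₀, w ∈ path σ' → σ' = σ) := by
  intro n
  induction n with
  | zero =>
    intro γ S hS hγ _
    rw [Nat.le_zero, Finset.card_eq_zero] at hS
    subst hS
    exact ⟨∅, by simp, by simp, by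
      simp only [Finset.sum_empty]
      exact Finset.sum_nonneg fun σ hσ => mul_nonneg (hγ σ hσ) (hz σ hσ), by simp⟩
  | succ n IH =>
    intro γ S hS hγ hfe
    rcases S.eq_empty_or_nonempty with rfl | hSne
    · exact ⟨∅, by simp, by simp, by
        simp only [Finset.sum_empty]
        exact Finset.sum_nonneg fun σ hσ => mul_nonneg (hγ σ hσ) (hz σ hσ), by simp⟩
    -- pick a deepest element e of S
    obtain ⟨e, heS, hemax⟩ := S.exists_max_image d hSne
    -- the links through e
    set A : Finset ι := K.filter (fun σ => e ∈ path σ) with hA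
    have hAne : A.Nonempty := by
      by_contra h
      rw [Finset.not_nonempty_iff_eq_empty] at h
      have := hfe e heS
      rw [← hA, h, Finset.sum_empty] at this
      linarith
    obtain ⟨σs, hσsA, hσsmin⟩ := A.exists_min_image γ hAne
    have hσsK : σs ∈ K := (Finset.mem_filter.1 hσsA).1
    have heσs : e ∈ path σs := (Finset.mem_filter.1 hσsA).2
    set δ : ℝ := γ σs with hδ
    have hδ0 : 0 ≤ δ := hγ σs hσsK
    -- reduced costs
    set γ' : ι → ℝ := fun σ => if e ∈ path σ then γ σ - δ else γ σ with hγ'def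
    have hγ'0 : ∀ σ ∈ K, 0 ≤ γ' σ := by
      intro σ hσ
      simp only [hγ'def]
      split_ifs with h
      · have : σ ∈ A := Finset.mem_filter.2 ⟨hσ, h⟩
        have := hσsmin σ this
        linarith
      · exact hγ σ hσ
    set S' : Finset α := S.erase e with hS'
    have hS'card : S'.card ≤ n := by
      have h1 : S'.card = S.card - 1 := Finset.card_erase_of_mem heS
      have h2 : 0 < S.card := Finset.card_pos.2 ⟨e, heS⟩
      omega
    obtain ⟨K₁, hK₁K, hcov₁, hcost₁, hwit₁⟩ := IH γ' S' hS'card hγ'0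
      (fun f hf => hfe f (Finset.mem_of_mem_erase hf))
    -- multiplicity of e in K₁ is at most 1
    have hmult : (K₁.filter (fun σ => e ∈ path σ)).card ≤ 1 := by
      by_contra h
      push_neg at h
      obtain ⟨σ, hσ, σ', hσ', hne⟩ := Finset.one_lt_card.1 h
      rw [Finset.mem_filter] at hσ hσ'
      obtain ⟨w, hwS', hwσ, hwuniq⟩ := hwit₁ σ hσ.1
      obtain ⟨w', hw'S', hw'σ', hw'uniq⟩ := hwit₁ σ' hσ'.1
      have hwd : d w < d e := by
        have h1 : d w ≤ d e := hemax w (Finset.mem_of_mem_erase hwS')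
        have h2 : w ≠ e := fun hh => (Finset.ne_of_mem_erase (hh ▸ hwS')) rfl
        have h3 : d w ≠ d e := hD σ (hK₁K hσ.1) w hwσ e hσ.2 h2
        omega
      have hw'd : d w' < d e := by
        have h1 : d w' ≤ d e := hemax w' (Finset.mem_of_mem_erase hw'S')
        have h2 : w' ≠ e := fun hh => (Finset.ne_of_mem_erase (hh ▸ hw'S')) rfl
        have h3 : d w' ≠ d e := hD σ' (hK₁K hσ'.1) w' hw'σ' e hσ'.2 h2
        omega
      rcases hC σ (hK₁K hσ.1) σ' (hK₁K hσ'.1) e hσ.2 hσ'.2 with hsub | hsub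
      · have : w ∈ path σ' := hsub (Finset.mem_filter.2 ⟨hwσ, hwd⟩)
        exact hne (hwuniq σ' hσ'.1 this).symm
      · have : w' ∈ path σ := hsub (Finset.mem_filter.2 ⟨hw'σ', hw'd⟩)
        exact hne (hw'uniq σ hσ.1 this)
    -- sum of γ over K₁ in terms of γ'
    have hsplit : ∑ σ ∈ K₁, γ σ =
        ∑ σ ∈ K₁, γ' σ + δ * (K₁.filter (fun σ => e ∈ path σ)).card := by
      have : ∀ σ ∈ K₁, γ σ = γ' σ + (if e ∈ path σ then δ else 0) := by
        intro σ _
        simp only [hγ'def]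
        split_ifs <;> ring
      rw [Finset.sum_congr rfl this, Finset.sum_add_distrib]
      congr 1
      rw [← Finset.sum_filter, Finset.sum_const, nsmul_eq_mul, mul_comm]
    -- dual accounting step
    have hdual : ∑ σ ∈ K, γ' σ * z σ + δ ≤ ∑ σ ∈ K, γ σ * z σ := by
      have hdiff : ∑ σ ∈ K, γ σ * z σ - ∑ σ ∈ K, γ' σ * z σ = δ * ∑ σ ∈ A, z σ := by
        rw [← Finset.sum_sub_distrib]
        have h2 : ∀ σ ∈ K, γ σ * z σ - γ' σ * z σ = if e ∈ path σ then δ * z σ else 0 := by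
          intro σ _
          simp only [hγ'def]
          split_ifs <;> ring
        rw [Finset.sum_congr rfl h2, ← Finset.sum_filter, ← hA, Finset.mul_sum]
      have h1 : (1:ℝ) ≤ ∑ σ ∈ A, z σ := by
        have := hfe e heS
        rwa [← hA] at this
      nlinarith
    -- define K₂, a cover of S of small cost
    have key : ∃ K₂ ⊆ K, (∀ f ∈ S, ∃ σ ∈ K₂, f ∈ path σ) ∧
        ∑ σ ∈ K₂, γ σ ≤ ∑ σ ∈ K, γ σ * z σ := by
      by_cases hcase : ∃ σ ∈ K₁, e ∈ path σ
      · refine ⟨K₁, hK₁K, ?_, ?_⟩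
        · intro f hf
          rcases eq_or_ne f e with rfl | hne
          · exact hcase
          · exact hcov₁ f (Finset.mem_erase.2 ⟨hne, hf⟩)
        · have hcard : (δ:ℝ) * (K₁.filter (fun σ => e ∈ path σ)).card ≤ δ := by
            have : ((K₁.filter (fun σ => e ∈ path σ)).card : ℝ) ≤ 1 := by
              exact_mod_cast hmult
            nlinarith
          calc ∑ σ ∈ K₁, γ σ
              = ∑ σ ∈ K₁, γ' σ + δ * (K₁.filter (fun σ => e ∈ path σ)).card := hsplit
            _ ≤ ∑ σ ∈ K, γ' σ * z σ + δ := by linarith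
            _ ≤ ∑ σ ∈ K, γ σ * z σ := hdual
      · have hσsnot : σs ∉ K₁ := fun h => hcase ⟨σs, h, heσs⟩
        refine ⟨insert σs K₁, ?_, ?_, ?_⟩
        · intro σ hσ
          rcases Finset.mem_insert.1 hσ with rfl | hσ
          · exact hσsK
          · exact hK₁K hσ
        · intro f hf
          rcases eq_or_ne f e with rfl | hne
          · exact ⟨σs, Finset.mem_insert_self _ _, heσs⟩
          · obtain ⟨σ, hσ, hfσ⟩ := hcov₁ f (Finset.mem_erase.2 ⟨hne, hf⟩)
            exact ⟨σ, Finset.mem_insert_of_mem hσ, hfσ⟩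
        · have hfilt : (K₁.filter (fun σ => e ∈ path σ)) = ∅ := by
            rw [Finset.filter_eq_empty_iff]
            intro σ hσ hee
            exact hcase ⟨σ, hσ, hee⟩
          rw [Finset.sum_insert hσsnot]
          have : ∑ σ ∈ K₁, γ σ = ∑ σ ∈ K₁, γ' σ := by
            rw [hsplit, hfilt]
            simp
          calc γ σs + ∑ σ ∈ K₁, γ σ = ∑ σ ∈ K₁, γ' σ + δ := by rw [this, hδ]; ring
            _ ≤ ∑ σ ∈ K, γ' σ * z σ + δ := by linarith
            _ ≤ ∑ σ ∈ K, γ σ * z σ := hdual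
    obtain ⟨K₂, hK₂K, hcov₂, hcost₂⟩ := key
    -- take a cover of minimum cardinality inside K₂
    set C : Finset (Finset ι) :=
      K₂.powerset.filter (fun T => ∀ f ∈ S, ∃ σ ∈ T, f ∈ path σ) with hC'
    have hK₂C : K₂ ∈ C := by
      rw [hC', Finset.mem_filter]
      exact ⟨Finset.mem_powerset_self _, hcov₂⟩
    obtain ⟨K₀, hK₀C, hK₀min⟩ := C.exists_min_image Finset.card ⟨K₂, hK₂C⟩
    rw [hC', Finset.mem_filter, Finset.mem_powerset] at hK₀C
    obtain ⟨hK₀K₂, hcov₀⟩ := hK₀C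
    refine ⟨K₀, fun σ h => hK₂K (hK₀K₂ h), hcov₀, ?_, ?_⟩
    · calc ∑ σ ∈ K₀, γ σ ≤ ∑ σ ∈ K₂, γ σ := by
            apply Finset.sum_le_sum_of_subset_of_nonneg hK₀K₂
            intro σ hσ _
            exact hγ σ (hK₂K hσ)
        _ ≤ ∑ σ ∈ K, γ σ * z σ := hcost₂
    · intro σ hσK₀
      have : ¬ (∀ f ∈ S, ∃ σ' ∈ K₀.erase σ, f ∈ path σ') := by
        intro hcov'
        have hmem : K₀.erase σ ∈ C := by
          rw [hC', Finset.mem_filter, Finset.mem_powerset]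
          exact ⟨(Finset.erase_subset _ _).trans hK₀K₂, hcov'⟩
        have h1 := hK₀min _ hmem
        have h2 : (K₀.erase σ).card < K₀.card := Finset.card_erase_lt_of_mem hσK₀
        omega
      push_neg at this
      obtain ⟨w, hwS, hw⟩ := this
      obtain ⟨σ'', hσ'', hwσ''⟩ := hcov₀ w hwS
      have hσ''σ : σ'' = σ := by
        by_contra hne
        exact hw σ'' (Finset.mem_erase.2 ⟨hne, hσ''⟩) hwσ''
      refine ⟨w, hwS, hσ''σ ▸ hwσ'', ?_⟩
      intro σ' hσ' hwσ'
      by_contra hne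
      exact hw σ' (Finset.mem_erase.2 ⟨hne, hσ'⟩) hwσ'

/-- Let `x` be feasible for the cut LP on the tree `G` and let
`E^h = {e : x(cov(e)) ≥ 2/ε}` be the heavily covered edges.  Then `y = (ε/2)·x` is
feasible for the cut LP on the contracted tree `G^h` (it fully covers every edge of
`E^h`), and hence, via the factor-`2` rounding, there is `L₀ ⊆ L` covering all edges of
`E^h` with `c(L₀) ≤ ε·cᵀx`. -/
theorem heavy_edges_contraction {V : Type*} [Fintype V] [DecidableEq V]
    (G : SimpleGraph V) (hG : G.IsTree) (L : Finset (V × V)) (c x : V × V → ℝ)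
    (hc : ∀ ℓ, 0 ≤ c ℓ) (hx : ∀ ℓ, 0 ≤ x ℓ)
    (ε : ℝ) (hε : 0 < ε)
    (hfeas : ∀ e ∈ G.edgeSet, 1 ≤ ∑ ℓ ∈ L.filter (· ∈ covE G hG e), x ℓ)
    (Eh : Set (Sym2 V))
    (hEh : Eh = {e ∈ G.edgeSet | 2 / ε ≤ ∑ ℓ ∈ L.filter (· ∈ covE G hG e), x ℓ}) :
    (∀ e ∈ Eh, 1 ≤ ∑ ℓ ∈ L.filter (· ∈ covE G hG e), (ε / 2) * x ℓ) ∧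
    ∃ L₀ ⊆ L, (∀ e ∈ Eh, ∃ ℓ ∈ L₀, e ∈ (tpath G hG ℓ.1 ℓ.2).edges) ∧
      ∑ ℓ ∈ L₀, c ℓ ≤ ε * ∑ ℓ ∈ L, c ℓ * x ℓ := by

  classical
  have part1 : ∀ e ∈ Eh, 1 ≤ ∑ ℓ ∈ L.filter (· ∈ covE G hG e), (ε / 2) * x ℓ := by
    intro e he
    rw [hEh] at he
    obtain ⟨heE, hcov⟩ := he
    rw [← Finset.mul_sum]
    have h2 : ε / 2 * (2 / ε) ≤ ε / 2 * ∑ ℓ ∈ L.filter (· ∈ covE G hG e), x ℓ :=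
      mul_le_mul_of_nonneg_left hcov (by positivity)
    have h3 : ε / 2 * (2 / ε) = 1 := by field_simp
    linarith
  refine ⟨part1, ?_⟩
  have hne : Nonempty V := hG.isConnected.nonempty
  obtain ⟨r⟩ := hne
  -- the meet (lca) function
  choose m hm1 hm2 hm3 using meet hG r
  -- the vertical split instance
  set K : Finset ((V × V) × Bool) := L ×ˢ (Finset.univ : Finset Bool) with hK
  set pathF : (V × V) × Bool → Finset (Sym2 V) := fun σ =>
    if σ.2 then (tpath G hG σ.1.1 (m σ.1.1 σ.1.2)).edges.toFinset
    else (tpath G hG σ.1.2 (m σ.1.1 σ.1.2)).edges.toFinset with hpathF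
  set z : (V × V) × Bool → ℝ := fun σ => ε / 2 * x σ.1 with hz'
  set γ : (V × V) × Bool → ℝ := fun σ => c σ.1 with hγ'
  set S : Finset (Sym2 V) := (Set.toFinite Eh).toFinset with hS'
  -- basic facts about the vertical paths
  have hvert : ∀ σ : (V × V) × Bool, ∃ a w, (w ∈ (tpath G hG a r).support) ∧
      pathF σ = (tpath G hG a w).edges.toFinset ∧
      (∀ f ∈ (tpath G hG a w).edges, f ∈ (tpath G hG σ.1.1 σ.1.2).edges) := by
    intro σ
    rcases σ with ⟨ℓ, s⟩
    cases s
    · exact ⟨ℓ.2, m ℓ.1 ℓ.2, hm2 ℓ.1 ℓ.2, by simp [hpathF],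
        fun f hf => (hm3 ℓ.1 ℓ.2 f).2 (Or.inr hf)⟩
    · exact ⟨ℓ.1, m ℓ.1 ℓ.2, hm1 ℓ.1 ℓ.2, by simp [hpathF],
        fun f hf => (hm3 ℓ.1 ℓ.2 f).2 (Or.inl hf)⟩
  -- hD for AVL
  have hD : ∀ σ ∈ K, ∀ e ∈ pathF σ, ∀ f ∈ pathF σ, e ≠ f →
      edepth G r e ≠ edepth G r f := by
    intro σ _ e he f hf hnef
    obtain ⟨a, w, hw, hpeq, _⟩ := hvert σ
    rw [hpeq, List.mem_toFinset] at he hf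
    have he' := (pre hG r (G.dist a r) a le_rfl w hw e).1 he
    have hf' := (pre hG r (G.dist a r) a le_rfl w hw f).1 hf
    exact depth_inj hG r (G.dist a r) a le_rfl e he'.1 f hf'.1 hnef
  -- the one-sided comparability statement
  have hCone : ∀ (a a' w w' : V), w ∈ (tpath G hG a r).support →
      w' ∈ (tpath G hG a' r).support → G.dist w' r ≤ G.dist w r →
      ∀ e ∈ (tpath G hG a w).edges, e ∈ (tpath G hG a' w').edges →
      ∀ f ∈ (tpath G hG a w).edges, edepth G r f < edepth G r e →
        f ∈ (tpath G hG a' w').edges := by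
    intro a a' w w' hw hw' hle e he he' f hf hlt
    have hea := (pre hG r (G.dist a r) a le_rfl w hw e).1 he
    have hea' := (pre hG r (G.dist a' r) a' le_rfl w' hw' e).1 he'
    have hfa := (pre hG r (G.dist a r) a le_rfl w hw f).1 hf
    obtain ⟨xx, yy, hexy, hd1, hd2, hsub, hiff⟩ :=
      suf hG r (G.dist a r) a le_rfl e hea.1
    obtain ⟨xx', yy', hexy', hd1', hd2', hsub', hiff'⟩ :=
      suf hG r (G.dist a' r) a' le_rfl e hea'.1
    have hyy : yy = yy' := by
      rw [hexy] at hexy'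
      rw [Sym2.eq_iff] at hexy'
      rcases hexy' with ⟨h1, h2⟩ | ⟨h1, h2⟩
      · exact h2
      · subst h1; subst h2
        omega
    have h5 : f ∈ (tpath G hG yy r).edges := (hiff f hfa.1).1 hlt
    have h6 : f ∈ (tpath G hG a' r).edges := hsub' f (hyy ▸ h5)
    refine (pre hG r (G.dist a' r) a' le_rfl w' hw' f).2 ⟨h6, ?_⟩
    have := hfa.2
    omega
  have hC : ∀ σ ∈ K, ∀ σ' ∈ K, ∀ e, e ∈ pathF σ → e ∈ pathF σ' →
      ((pathF σ).filter (fun f => edepth G r f < edepth G r e) ⊆ pathF σ' ∨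
        (pathF σ').filter (fun f => edepth G r f < edepth G r e) ⊆ pathF σ) := by
    intro σ _ σ' _ e he he'
    obtain ⟨a, w, hw, hpeq, _⟩ := hvert σ
    obtain ⟨a', w', hw', hpeq', _⟩ := hvert σ'
    rw [hpeq, List.mem_toFinset] at he
    rw [hpeq', List.mem_toFinset] at he'
    rcases le_total (G.dist w' r) (G.dist w r) with hle | hle
    · left
      intro f hf
      rw [Finset.mem_filter, hpeq, List.mem_toFinset] at hf
      rw [hpeq', List.mem_toFinset]
      exact hCone a a' w w' hw hw' hle e he he' f hf.1 hf.2
    · right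
      intro f hf
      rw [Finset.mem_filter, hpeq', List.mem_toFinset] at hf
      rw [hpeq, List.mem_toFinset]
      exact hCone a' a w' w hw' hw hle e he' he f hf.1 hf.2
  -- nonnegativity of z
  have hz0 : ∀ σ ∈ K, 0 ≤ z σ := by
    intro σ _
    exact mul_nonneg (by positivity) (hx σ.1)
  -- feasibility for the vertical instance
  have hfeasV : ∀ e ∈ S, 1 ≤ ∑ σ ∈ K.filter (fun σ => e ∈ pathF σ), z σ := by
    intro e heS
    rw [hS', Set.Finite.mem_toFinset] at heS
    set F := L.filter (· ∈ covE G hG e) with hF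
    set g : V × V → (V × V) × Bool := fun ℓ =>
      (ℓ, if e ∈ (tpath G hG ℓ.1 (m ℓ.1 ℓ.2)).edges then true else false) with hg
    have hgmem : ∀ ℓ ∈ F, g ℓ ∈ K.filter (fun σ => e ∈ pathF σ) := by
      intro ℓ hℓ
      rw [hF, Finset.mem_filter] at hℓ
      obtain ⟨hℓL, hℓcov⟩ := hℓ
      rw [Finset.mem_filter]
      constructor
      · rw [hK, Finset.mem_product]
        exact ⟨hℓL, Finset.mem_univ _⟩
      · have hcov' : e ∈ (tpath G hG ℓ.1 ℓ.2).edges := hℓcov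
        have hsplit2 := (hm3 ℓ.1 ℓ.2 e).1 hcov'
        by_cases hcase : e ∈ (tpath G hG ℓ.1 (m ℓ.1 ℓ.2)).edges
        · have hgeq : g ℓ = (ℓ, true) := by rw [hg]; simp [hcase]
          rw [hgeq]
          simp only [hpathF]
          simpa using hcase
        · have hgeq : g ℓ = (ℓ, false) := by rw [hg]; simp [hcase]
          rw [hgeq]
          simp only [hpathF]
          rcases hsplit2 with h | h
          · exact absurd h hcase
          · simpa using h
    have hginj : Set.InjOn g F := by
      intro ℓ₁ _ ℓ₂ _ h
      exact congrArg Prod.fst h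
    have h1 : (1:ℝ) ≤ ∑ ℓ ∈ F, z (g ℓ) := by
      have := part1 e heS
      rw [← hF] at this
      convert this using 1
    have h2 : ∑ ℓ ∈ F, z (g ℓ) = ∑ σ ∈ F.image g, z σ :=
      (Finset.sum_image (fun a ha b hb hab => hginj ha hb hab)).symm
    have h3 : ∑ σ ∈ F.image g, z σ ≤ ∑ σ ∈ K.filter (fun σ => e ∈ pathF σ), z σ := by
      apply Finset.sum_le_sum_of_subset_of_nonneg
      · intro σ hσ
        obtain ⟨ℓ, hℓ, rfl⟩ := Finset.mem_image.1 hσ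
        exact hgmem ℓ hℓ
      · intro σ hσ _
        exact hz0 σ (Finset.mem_filter.1 hσ).1
    linarith
  have hγ0 : ∀ σ ∈ K, 0 ≤ γ σ := fun σ _ => hc σ.1
  obtain ⟨K₀, hK₀K, hcov₀, hcost₀, -⟩ :=
    AVL (edepth G r) K pathF z hz0 hD hC S.card γ S le_rfl hγ0 hfeasV
  refine ⟨K₀.image Prod.fst, ?_, ?_, ?_⟩
  · intro ℓ hℓ
    obtain ⟨σ, hσ, rfl⟩ := Finset.mem_image.1 hℓ
    have := hK₀K hσ
    rw [hK, Finset.mem_product] at this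
    exact this.1
  · intro e he
    have heS : e ∈ S := by rw [hS', Set.Finite.mem_toFinset]; exact he
    obtain ⟨σ, hσ, heσ⟩ := hcov₀ e heS
    refine ⟨σ.1, Finset.mem_image_of_mem _ hσ, ?_⟩
    obtain ⟨a, w, hw, hpeq, hmap⟩ := hvert σ
    rw [hpeq, List.mem_toFinset] at heσ
    exact hmap e heσ
  · have hstep1 : ∑ ℓ ∈ K₀.image Prod.fst, c ℓ ≤ ∑ σ ∈ K₀, γ σ :=
      sum_image_le' K₀ Prod.fst c (fun σ _ => hc σ.1)
    have hstep2 : ∑ σ ∈ K, γ σ * z σ = ε * ∑ ℓ ∈ L, c ℓ * x ℓ := by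
      rw [hK, Finset.sum_product]
      rw [Finset.mul_sum]
      apply Finset.sum_congr rfl
      intro ℓ _
      simp only [hγ', hz']
      rw [Finset.sum_const]
      simp only [Finset.card_univ, Fintype.card_bool]
      push_cast
      ring
    linarith
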